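/- Let L ≥ 1, let B ∈ ℝ^{L×L} satisfy ∑_{l=0}^{L−1} b_{l,m}² = 1 for every m, let α_l ≥ 0 for all l, and let σ² > 0. Define the density-evolution sequences by sir_m(0) = 0 for all m, and for i ≥ 1: σ_l²(i) = σ² + α_l ∑_{m=0}^{L−1} b_{l,m}²·mmse(sir_m(i−1)) and sir_m(i) = ∑_{l=0}^{L−1} b_{l,m}²/σ_l²(i), where mmse(s) = 1 − ∫_ℝ tanh(s + √s·z)·(2π)^{−1/2} e^{−z²/2} dz. Then for every m, the sequence i ↦ sir_m(i) is nondecreasing, and for every l, the sequence i ↦ σ_l²(i) is nonincreasing for i ≥ 1. -/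

import Mathlib

open MeasureTheory Real Set

/-- The minimum mean-squared error of the BPSK-input real AWGN channel with
signal-to-noise ratio `s`. -/
noncomputable def mmse (s : ℝ) : ℝ :=
  1 - ∫ z : ℝ,
    Real.tanh (s + Real.sqrt s * z) * ((Real.sqrt (2 * Real.pi))⁻¹ * Real.exp (-z ^ 2 / 2))



noncomputable def phi (z : ℝ) : ℝ := (Real.sqrt (2 * Real.pi))⁻¹ * Real.exp (-z ^ 2 / 2)

lemma phi_nonneg (z : ℝ) : 0 ≤ phi z := by
  unfold phi; positivity

lemma phi_cont : Continuous phi := by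
  unfold phi; fun_prop

lemma phi_even (x : ℝ) : phi (-x) = phi x := by
  unfold phi; rw [neg_sq]

lemma phi_eq (z : ℝ) : phi z = (Real.sqrt (2 * Real.pi))⁻¹ * Real.exp (-(1/2) * z ^ 2) := by
  unfold phi; ring_nf

lemma phi_integrable : Integrable phi := by
  have h : Integrable (fun z : ℝ => Real.exp (-(1/2) * z ^ 2)) :=
    integrable_exp_neg_mul_sq (by norm_num)
  have h2 := h.const_mul (Real.sqrt (2 * Real.pi))⁻¹
  apply h2.congr
  filter_upwards with z
  rw [phi_eq]

lemma integral_phi : ∫ z, phi z = 1 := by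
  simp only [phi_eq]
  rw [MeasureTheory.integral_const_mul, integral_gaussian]
  rw [inv_mul_eq_one₀ (by positivity)]
  rw [show Real.pi / (1/2) = 2 * Real.pi by ring]

lemma phi_le_phi {x y : ℝ} (h : x ^ 2 ≤ y ^ 2) : phi y ≤ phi x := by
  unfold phi
  apply mul_le_mul_of_nonneg_left _ (by positivity)
  exact Real.exp_le_exp.2 (by linarith)

noncomputable def F (x : ℝ) : ℝ := ∫ t in (0:ℝ)..x, phi t

lemma F_hasDerivAt (x : ℝ) : HasDerivAt F (phi x) x :=
  intervalIntegral.integral_hasDerivAt_right (phi_cont.intervalIntegrable 0 x)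
    phi_cont.stronglyMeasurable.stronglyMeasurableAtFilter phi_cont.continuousAt

lemma F_cont : Continuous F :=
  continuous_iff_continuousAt.2 fun x => (F_hasDerivAt x).continuousAt

noncomputable def Dfun (c u : ℝ) : ℝ := F (c / u + u) - F (c / u - u)

lemma Dfun_eq_interval (c u : ℝ) :
    Dfun c u = ∫ x in (c / u - u)..(c / u + u), phi x := by
  unfold Dfun F
  rw [← intervalIntegral.integral_add_adjacent_intervals
    (phi_cont.intervalIntegrable 0 (c / u - u))
    (phi_cont.intervalIntegrable (c / u - u) (c / u + u))]
  ring

lemma Dfun_nonneg {c u : ℝ} (hu : 0 < u) : 0 ≤ Dfun c u := by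
  rw [Dfun_eq_interval]
  apply intervalIntegral.integral_nonneg (by linarith) (fun x _ => phi_nonneg x)

lemma Dfun_eq_setIntegral {c u : ℝ} (hu : 0 < u) :
    Dfun c u = ∫ x in Ioc (c / u - u) (c / u + u), phi x := by
  rw [Dfun_eq_interval, intervalIntegral.integral_of_le (by linarith)]

lemma Dfun_le_one {c u : ℝ} (hu : 0 < u) : Dfun c u ≤ 1 := by
  rw [Dfun_eq_setIntegral hu, ← integral_phi]
  exact setIntegral_le_integral phi_integrable (Filter.Eventually.of_forall phi_nonneg)

lemma b_hasDerivAt (c u : ℝ) (hu : u ≠ 0) :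
    HasDerivAt (fun u : ℝ => c / u + u) (1 - c / u ^ 2) u := by
  have h1 : HasDerivAt (fun u : ℝ => c / u) (-c / u ^ 2) u := by
    simpa [div_eq_mul_inv, mul_comm, neg_div] using
      ((hasDerivAt_inv hu).const_mul c)
  refine (h1.add (hasDerivAt_id u)).congr_deriv ?_
  ring

lemma a_hasDerivAt (c u : ℝ) (hu : u ≠ 0) :
    HasDerivAt (fun u : ℝ => c / u - u) (-(1 + c / u ^ 2)) u := by
  have h1 : HasDerivAt (fun u : ℝ => c / u) (-c / u ^ 2) u := by
    simpa [div_eq_mul_inv, mul_comm, neg_div] using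
      ((hasDerivAt_inv hu).const_mul c)
  have := h1.sub (hasDerivAt_id u)
  refine this.congr_deriv ?_
  ring

lemma Dfun_hasDerivAt {c u : ℝ} (hu : u ≠ 0) :
    HasDerivAt (fun u => Dfun c u)
      (phi (c / u + u) * (1 - c / u ^ 2) + phi (c / u - u) * (1 + c / u ^ 2)) u := by
  have hB : HasDerivAt (fun u : ℝ => F (c / u + u)) (phi (c / u + u) * (1 - c / u ^ 2)) u := by
    have := (F_hasDerivAt _).comp u (b_hasDerivAt c u hu)
    exact this
  have hA : HasDerivAt (fun u : ℝ => F (c / u - u)) (phi (c / u - u) * (-(1 + c / u ^ 2))) u := by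
    have := (F_hasDerivAt _).comp u (a_hasDerivAt c u hu)
    exact this
  have := hB.sub hA
  refine this.congr_deriv ?_
  ring

lemma Dfun_deriv_nonneg {c u : ℝ} (hc : 0 ≤ c) (hu : 0 < u) :
    0 ≤ phi (c / u + u) * (1 - c / u ^ 2) + phi (c / u - u) * (1 + c / u ^ 2) := by
  have hle : phi (c / u + u) ≤ phi (c / u - u) := by
    apply phi_le_phi
    have : 0 ≤ c / u * u := by positivity
    nlinarith
  have h1 : 0 ≤ phi (c / u + u) := phi_nonneg _
  have h2 : 0 ≤ phi (c / u - u) := phi_nonneg _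
  have h3 : 0 ≤ c / u ^ 2 := by positivity
  rcases le_or_gt (c / u ^ 2) 1 with h | h
  · have : 0 ≤ 1 - c / u ^ 2 := by linarith
    nlinarith
  · nlinarith

lemma Dfun_mono {c : ℝ} (hc : 0 ≤ c) : MonotoneOn (fun u => Dfun c u) (Ioi 0) := by
  apply monotoneOn_of_deriv_nonneg (convex_Ioi 0)
  · intro u hu
    exact (Dfun_hasDerivAt (ne_of_gt (by exact hu))).continuousAt.continuousWithinAt
  · intro u hu
    rw [interior_Ioi] at hu
    exact (Dfun_hasDerivAt (ne_of_gt hu)).differentiableAt.differentiableWithinAt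
  · intro u hu
    rw [interior_Ioi] at hu
    rw [(Dfun_hasDerivAt (ne_of_gt hu)).deriv]
    exact Dfun_deriv_nonneg hc hu


lemma abs_sinh_le_cosh (x : ℝ) : |Real.sinh x| ≤ Real.cosh x := by
  have h := Real.cosh_sq_sub_sinh_sq x
  have hc : 0 < Real.cosh x := Real.cosh_pos x
  nlinarith [abs_nonneg (Real.sinh x), sq_abs (Real.sinh x)]

lemma abs_tanh_le_one (x : ℝ) : |Real.tanh x| ≤ 1 := by
  rw [Real.tanh_eq_sinh_div_cosh, abs_div, abs_of_pos (Real.cosh_pos x)]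
  rw [div_le_one (Real.cosh_pos x)]
  exact abs_sinh_le_cosh x

lemma tanh_le_one (x : ℝ) : Real.tanh x ≤ 1 := (abs_le.1 (abs_tanh_le_one x)).2

lemma hasDerivAt_tanh (x : ℝ) : HasDerivAt Real.tanh (1 / Real.cosh x ^ 2) x := by
  have h := (Real.hasDerivAt_sinh x).div (Real.hasDerivAt_cosh x) (Real.cosh_pos x).ne'
  have heq : (Real.sinh / Real.cosh) = Real.tanh := by
    funext y; rw [Pi.div_apply, Real.tanh_eq_sinh_div_cosh]
  rw [heq] at h
  refine h.congr_deriv ?_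
  have := Real.cosh_sq_sub_sinh_sq x
  rw [div_left_inj' (by positivity)]
  linarith

lemma sech2_cont : Continuous (fun c : ℝ => 1 / Real.cosh c ^ 2) := by
  apply Continuous.div continuous_const (by fun_prop)
  intro x; positivity

lemma sech2_nonneg (c : ℝ) : 0 ≤ 1 / Real.cosh c ^ 2 := by positivity

lemma sech2_le (c : ℝ) : 1 / Real.cosh c ^ 2 ≤ 4 * Real.exp (-2 * c) := by
  have h1 : Real.exp c / 2 ≤ Real.cosh c := by
    rw [Real.cosh_eq]
    have := (Real.exp_pos (-c)).le
    linarith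
  have h2 : 0 < Real.exp c / 2 := by positivity
  have h3 : (Real.exp c / 2) ^ 2 ≤ Real.cosh c ^ 2 := by nlinarith [Real.cosh_pos c]
  have h4 : (0:ℝ) < (Real.exp c / 2) ^ 2 := by positivity
  calc 1 / Real.cosh c ^ 2 ≤ 1 / (Real.exp c / 2) ^ 2 := by
        apply div_le_div_of_nonneg_left one_pos.le h4 h3
    _ = 4 * Real.exp (-2 * c) := by
        rw [div_pow, ← Real.exp_nat_mul]
        rw [div_div_eq_mul_div, one_mul, div_eq_iff (by positivity)]
        rw [mul_assoc, ← Real.exp_add]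
        norm_num

lemma tanh_eq_intervalIntegral (x : ℝ) :
    Real.tanh x = ∫ c in (0:ℝ)..x, 1 / Real.cosh c ^ 2 := by
  rw [intervalIntegral.integral_eq_sub_of_hasDerivAt
    (fun c _ => hasDerivAt_tanh c) (sech2_cont.intervalIntegrable 0 x)]
  simp [Real.tanh_zero]


noncomputable def K (x c : ℝ) : ℝ :=
  (if c < x then (1:ℝ) else 0) - (if x < -c then (1:ℝ) else 0)

lemma K_abs_le (x c : ℝ) : |K x c| ≤ 1 := by
  unfold K; split_ifs <;> norm_num

lemma tanh_eq_K (x : ℝ) :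
    Real.tanh x = ∫ c in Ioi (0:ℝ), K x c * (1 / Real.cosh c ^ 2) := by
  rcases le_or_gt 0 x with hx | hx
  · have heq : EqOn (fun c => K x c * (1 / Real.cosh c ^ 2))
        (Set.indicator (Iio x) (fun c => 1 / Real.cosh c ^ 2)) (Ioi 0) := by
      intro c hc
      have hc0 : (0:ℝ) < c := hc
      have h2 : ¬ x < -c := by push_neg; linarith
      simp only [K, h2, if_false, Set.indicator_apply, mem_Iio]
      split_ifs <;> simp
    rw [setIntegral_congr_fun measurableSet_Ioi heq,
      setIntegral_indicator measurableSet_Iio]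
    rw [Ioi_inter_Iio, ← integral_Ioc_eq_integral_Ioo,
      ← intervalIntegral.integral_of_le hx]
    exact tanh_eq_intervalIntegral x
  · have heq : EqOn (fun c => K x c * (1 / Real.cosh c ^ 2))
        (fun c => - Set.indicator (Iio (-x)) (fun c => 1 / Real.cosh c ^ 2) c) (Ioi 0) := by
      intro c hc
      have hc0 : (0:ℝ) < c := hc
      have h1 : ¬ c < x := by push_neg; linarith
      have h2 : x < -c ↔ c < -x := by constructor <;> intro <;> linarith
      simp only [K, h1, if_false, Set.indicator_apply, mem_Iio, h2]
      split_ifs <;> simp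
    rw [setIntegral_congr_fun measurableSet_Ioi heq, integral_neg,
      setIntegral_indicator measurableSet_Iio]
    rw [Ioi_inter_Iio, ← integral_Ioc_eq_integral_Ioo,
      ← intervalIntegral.integral_of_le (by linarith)]
    rw [← tanh_eq_intervalIntegral (-x), Real.tanh_neg, neg_neg]


lemma inner_integral {u c : ℝ} (hu : 0 < u) (hc : 0 ≤ c) :
    ∫ z, K (u ^ 2 + u * z) c * phi z = Dfun c u := by
  set A := c / u - u with hA
  set B := c / u + u with hB
  have hAB : A ≤ B := by rw [hA, hB]; linarith
  have e1 : ∀ z : ℝ, (c < u ^ 2 + u * z ↔ A < z) := by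
    intro z
    rw [hA, sub_lt_iff_lt_add, div_lt_iff₀ hu]
    constructor <;> intro h <;> nlinarith
  have e2 : ∀ z : ℝ, (u ^ 2 + u * z < -c ↔ z < -B) := by
    intro z
    rw [hB, show -(c / u + u) = (-c - u ^ 2) / u by field_simp; ring, lt_div_iff₀ hu]
    constructor <;> intro h <;> nlinarith
  have h1 : (fun z => K (u ^ 2 + u * z) c * phi z)
      = fun z => Set.indicator (Ioi A) phi z - Set.indicator (Iio (-B)) phi z := by
    funext z
    simp only [K, e1 z, e2 z, Set.indicator_apply, mem_Ioi, mem_Iio, sub_mul, one_mul, zero_mul]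
    split_ifs <;> ring
  rw [h1, integral_sub (phi_integrable.indicator measurableSet_Ioi)
    (phi_integrable.indicator measurableSet_Iio),
    integral_indicator measurableSet_Ioi, integral_indicator measurableSet_Iio]
  have hsym : ∫ z in Iio (-B), phi z = ∫ z in Ioi B, phi z := by
    have h := integral_comp_neg_Ioi B phi
    simp only [phi_even] at h
    rw [← integral_Iic_eq_integral_Iio, ← h]
  have hsplit : ∫ z in Ioi A, phi z
      = (∫ z in Ioc A B, phi z) + ∫ z in Ioi B, phi z := by
    rw [← setIntegral_union (Set.Ioc_disjoint_Ioi le_rfl) measurableSet_Ioi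
      (phi_integrable.integrableOn) (phi_integrable.integrableOn),
      Ioc_union_Ioi_eq_Ioi hAB]
  rw [hsym, hsplit, Dfun_eq_setIntegral hu]
  ring


lemma K_meas (u : ℝ) :
    Measurable (fun p : ℝ × ℝ => K (u ^ 2 + u * p.1) p.2) := by
  unfold K
  apply Measurable.sub
  · exact Measurable.ite
      (measurableSet_lt measurable_snd (by fun_prop)) measurable_const measurable_const
  · exact Measurable.ite
      (measurableSet_lt (by fun_prop) measurable_snd.neg) measurable_const measurable_const

lemma fubini_integrable (u : ℝ) :
    Integrable (Function.uncurry fun z c =>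
        K (u ^ 2 + u * z) c * (1 / Real.cosh c ^ 2) * phi z)
      (MeasureTheory.volume.prod (MeasureTheory.volume.restrict (Ioi 0))) := by
  have hbound : Integrable (fun p : ℝ × ℝ => phi p.1 * (4 * Real.exp (-2 * p.2)))
      (MeasureTheory.volume.prod (MeasureTheory.volume.restrict (Ioi 0))) := by
    exact phi_integrable.mul_prod ((exp_neg_integrableOn_Ioi 0 (by norm_num : (0:ℝ) < 2)).const_mul 4)
  have hmeas : AEStronglyMeasurable (Function.uncurry fun z c =>
      K (u ^ 2 + u * z) c * (1 / Real.cosh c ^ 2) * phi z)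
      (MeasureTheory.volume.prod (MeasureTheory.volume.restrict (Ioi 0))) := by
    apply Measurable.aestronglyMeasurable
    exact ((K_meas u).mul (sech2_cont.measurable.comp measurable_snd)).mul
      (phi_cont.measurable.comp measurable_fst)
  apply Integrable.mono' hbound hmeas
  filter_upwards with p
  simp only [Function.uncurry, Real.norm_eq_abs]
  rw [abs_mul, abs_mul, abs_of_nonneg (phi_nonneg _), abs_of_nonneg (sech2_nonneg _)]
  have h1 := K_abs_le (u ^ 2 + u * p.1) p.2
  have h2 := sech2_le p.2
  have h3 := phi_nonneg p.1
  have h4 := sech2_nonneg p.2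
  have h5 := abs_nonneg (K (u ^ 2 + u * p.1) p.2)
  nlinarith [mul_nonneg (mul_nonneg (sub_nonneg.2 h1) h4) h3,
    mul_nonneg (sub_nonneg.2 h2) h3]

lemma g_repr' {u : ℝ} (hu : 0 < u) :
    ∫ z, Real.tanh (u ^ 2 + u * z) * phi z
      = ∫ c in Ioi (0:ℝ), Dfun c u * (1 / Real.cosh c ^ 2) := by
  have step1 : ∫ z, Real.tanh (u ^ 2 + u * z) * phi z
      = ∫ z, ∫ c in Ioi (0:ℝ), K (u ^ 2 + u * z) c * (1 / Real.cosh c ^ 2) * phi z := by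
    congr 1; funext z
    rw [tanh_eq_K, ← integral_mul_const]
  rw [step1, integral_integral_swap (fubini_integrable u)]
  apply setIntegral_congr_fun measurableSet_Ioi
  intro c hc
  have : ∀ z, K (u ^ 2 + u * z) c * (1 / Real.cosh c ^ 2) * phi z
      = K (u ^ 2 + u * z) c * phi z * (1 / Real.cosh c ^ 2) := fun z => by ring
  simp only [this]
  rw [integral_mul_const, inner_integral hu (le_of_lt hc)]


noncomputable def gfun (s : ℝ) : ℝ := ∫ z, Real.tanh (s + Real.sqrt s * z) * phi z

lemma continuous_tanh' : Continuous Real.tanh :=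
  continuous_iff_continuousAt.2 fun x => (hasDerivAt_tanh x).continuousAt

lemma integrable_tanh_phi (s : ℝ) :
    Integrable (fun z => Real.tanh (s + Real.sqrt s * z) * phi z) := by
  have hc : Continuous fun z => Real.tanh (s + Real.sqrt s * z) * phi z :=
    (continuous_tanh'.comp (by fun_prop)).mul phi_cont
  apply Integrable.mono' phi_integrable hc.aestronglyMeasurable
  filter_upwards with z
  rw [Real.norm_eq_abs, abs_mul, abs_of_nonneg (phi_nonneg z)]
  have := abs_tanh_le_one (s + Real.sqrt s * z)
  nlinarith [phi_nonneg z, abs_nonneg (Real.tanh (s + Real.sqrt s * z))]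

lemma gfun_le_one (s : ℝ) : gfun s ≤ 1 := by
  unfold gfun
  rw [← integral_phi]
  apply integral_mono (integrable_tanh_phi s) phi_integrable
  intro z
  show Real.tanh (s + Real.sqrt s * z) * phi z ≤ phi z
  have h := tanh_le_one (s + Real.sqrt s * z)
  nlinarith [phi_nonneg z]

lemma gfun_zero : gfun 0 = 0 := by
  unfold gfun
  simp [Real.sqrt_zero, Real.tanh_zero]

lemma gfun_eq {s : ℝ} (hs : 0 < s) :
    gfun s = ∫ c in Ioi (0:ℝ), Dfun c (Real.sqrt s) * (1 / Real.cosh c ^ 2) := by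
  have hu : 0 < Real.sqrt s := Real.sqrt_pos.2 hs
  have hsq : Real.sqrt s ^ 2 = s := Real.sq_sqrt hs.le
  rw [← g_repr' hu]
  unfold gfun
  congr 1; funext z; rw [hsq]

lemma integrableOn_Dfun_sech2 {u : ℝ} (hu : 0 < u) :
    IntegrableOn (fun c => Dfun c u * (1 / Real.cosh c ^ 2)) (Ioi 0) := by
  apply Integrable.mono' ((exp_neg_integrableOn_Ioi 0 (by norm_num : (0:ℝ) < 2)).const_mul 4)
  · apply Continuous.aestronglyMeasurable
    apply Continuous.mul _ sech2_cont
    exact (F_cont.comp (by fun_prop)).sub (F_cont.comp (by fun_prop))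
  · filter_upwards with c
    rw [Real.norm_eq_abs, abs_mul, abs_of_nonneg (Dfun_nonneg hu),
      abs_of_nonneg (sech2_nonneg c)]
    have h1 := Dfun_le_one (c := c) hu
    have h2 := sech2_le c
    have h3 := sech2_nonneg c
    have h4 := Dfun_nonneg (c := c) hu
    nlinarith

lemma gfun_nonneg {s : ℝ} (hs : 0 ≤ s) : 0 ≤ gfun s := by
  rcases eq_or_lt_of_le hs with h | h
  · rw [← h, gfun_zero]
  · rw [gfun_eq h]
    apply setIntegral_nonneg measurableSet_Ioi
    intro c _
    exact mul_nonneg (Dfun_nonneg (Real.sqrt_pos.2 h)) (sech2_nonneg c)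

lemma gfun_mono {s t : ℝ} (hs : 0 < s) (hst : s ≤ t) : gfun s ≤ gfun t := by
  have ht : 0 < t := lt_of_lt_of_le hs hst
  have hus : 0 < Real.sqrt s := Real.sqrt_pos.2 hs
  have hut : 0 < Real.sqrt t := Real.sqrt_pos.2 ht
  have huu : Real.sqrt s ≤ Real.sqrt t := Real.sqrt_le_sqrt hst
  rw [gfun_eq hs, gfun_eq ht]
  apply setIntegral_mono_on (integrableOn_Dfun_sech2 hus) (integrableOn_Dfun_sech2 hut)
    measurableSet_Ioi
  intro c hc
  apply mul_le_mul_of_nonneg_right _ (sech2_nonneg c)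
  exact Dfun_mono (le_of_lt hc) (mem_Ioi.2 hus) (mem_Ioi.2 hut) huu

lemma mmse_eq (s : ℝ) : mmse s = 1 - gfun s := rfl

lemma mmse_nonneg (s : ℝ) : 0 ≤ mmse s := by
  rw [mmse_eq]; have := gfun_le_one s; linarith

lemma mmse_anti {s t : ℝ} (hs : 0 ≤ s) (hst : s ≤ t) : mmse t ≤ mmse s := by
  rw [mmse_eq, mmse_eq]
  rcases eq_or_lt_of_le hs with h | h
  · rw [← h, gfun_zero]
    have := gfun_nonneg (hs.trans hst)
    linarith
  · have := gfun_mono h hst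
    linarith

/-- **Monotonicity of the density-evolution sequences.**
For the coupled DE recursion `sir_m(0) = 0`,
`σ_l²(i) = σ² + α_l ∑_m b_{l,m}²·mmse(sir_m(i−1))`,
`sir_m(i) = ∑_l b_{l,m}²/σ_l²(i)` (for `i ≥ 1`), with unit column square-sums,
`α_l ≥ 0`, and `σ² > 0`, each `i ↦ sir_m(i)` is nondecreasing and each
`i ↦ σ_l²(i)` is nonincreasing for `i ≥ 1`. -/
theorem de_monotone (L : ℕ) (hL : 1 ≤ L) (B : Fin L → Fin L → ℝ)
    (hB : ∀ m : Fin L, ∑ l : Fin L, (B l m) ^ 2 = 1)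
    (α : Fin L → ℝ) (hα : ∀ l, 0 ≤ α l) (σ2 : ℝ) (hσ2 : 0 < σ2)
    (sir : ℕ → Fin L → ℝ) (sigma2 : ℕ → Fin L → ℝ)
    (hsir0 : ∀ m, sir 0 m = 0)
    (hsigma2 : ∀ i l,
      sigma2 (i + 1) l = σ2 + α l * ∑ m : Fin L, (B l m) ^ 2 * mmse (sir i m))
    (hsir : ∀ i m, sir (i + 1) m = ∑ l : Fin L, (B l m) ^ 2 / sigma2 (i + 1) l) :
    (∀ m : Fin L, Monotone fun i : ℕ => sir i m) ∧
    (∀ l : Fin L, ∀ i j : ℕ, 1 ≤ i → i ≤ j → sigma2 j l ≤ sigma2 i l) := by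
  have sig_pos : ∀ i l, 0 < sigma2 (i + 1) l := by
    intro i l
    rw [hsigma2]
    have hsum : 0 ≤ ∑ m : Fin L, (B l m) ^ 2 * mmse (sir i m) :=
      Finset.sum_nonneg fun m _ => mul_nonneg (sq_nonneg _) (mmse_nonneg _)
    have := mul_nonneg (hα l) hsum
    linarith
  have sir_nonneg : ∀ i m, 0 ≤ sir i m := by
    intro i m
    cases i with
    | zero => rw [hsir0]
    | succ i =>
      rw [hsir]
      exact Finset.sum_nonneg fun l _ => div_nonneg (sq_nonneg _) (sig_pos i l).le
  have step : ∀ i : ℕ, ∀ m, sir i m ≤ sir (i + 1) m := by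
    intro i
    induction i with
    | zero => intro m; rw [hsir0]; exact sir_nonneg 1 m
    | succ i ih =>
      have hm : ∀ m, mmse (sir (i + 1) m) ≤ mmse (sir i m) :=
        fun m => mmse_anti (sir_nonneg i m) (ih m)
      have hs : ∀ l, sigma2 (i + 2) l ≤ sigma2 (i + 1) l := by
        intro l
        rw [hsigma2, hsigma2]
        have : ∑ m : Fin L, (B l m) ^ 2 * mmse (sir (i + 1) m)
            ≤ ∑ m : Fin L, (B l m) ^ 2 * mmse (sir i m) :=
          Finset.sum_le_sum fun m _ => mul_le_mul_of_nonneg_left (hm m) (sq_nonneg _)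
        have := mul_le_mul_of_nonneg_left this (hα l)
        linarith
      intro m
      rw [hsir, hsir]
      apply Finset.sum_le_sum
      intro l _
      have h1 := sig_pos (i + 1) l
      have h2 := sig_pos i l
      have h3 := hs l
      exact div_le_div_of_nonneg_left (sq_nonneg _) h1 h3
  have sig_step : ∀ k : ℕ, 1 ≤ k → ∀ l, sigma2 (k + 1) l ≤ sigma2 k l := by
    intro k hk l
    obtain ⟨n, rfl⟩ := Nat.exists_eq_add_of_le' hk
    rw [hsigma2, hsigma2]
    have : ∑ m : Fin L, (B l m) ^ 2 * mmse (sir (n + 1) m)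
        ≤ ∑ m : Fin L, (B l m) ^ 2 * mmse (sir n m) :=
      Finset.sum_le_sum fun m _ => mul_le_mul_of_nonneg_left
        (mmse_anti (sir_nonneg n m) (step n m)) (sq_nonneg _)
    have := mul_le_mul_of_nonneg_left this (hα l)
    linarith
  constructor
  · intro m
    exact monotone_nat_of_le_succ fun i => step i m
  · intro l i j hi hij
    induction j, hij using Nat.le_induction with
    | base => exact le_refl _
    | succ j hj ihj => exact le_trans (sig_step j (le_trans hi hj) l) ihj
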